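/- Let α, β ∈ ℂ and let τ : ℤ → ℂ be a Somos 4 sequence with coefficients α, β such that τ_n ≠ 0 for all n ∈ ℤ, let f_n = τ_{n+1} τ_{n-1} / (τ_n)^2, and let J be the (constant) value of J_n = f_{n-1} f_n + α (1/f_{n-1} + 1/f_n) + β/(f_{n-1} f_n). Set α' = −β and β' = α² + βJ. Then for all n ∈ ℤ: f_{n-1} f_n f_{n+1} + α' (1/f_{n-1} + 1/f_n + 1/f_{n+1}) + β'/(f_{n-1} f_n f_{n+1}) = 2α, and f_{n-1} f_n + f_n f_{n+1} + α' (1/(f_{n-1} f_n) + 1/(f_n f_{n+1})) + β'/(f_{n-1} (f_n)^2 f_{n+1}) = J. -/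

import Mathlib

/-- For a nonvanishing Somos 4 sequence viewed as a Somos 5 sequence with
`α' = -β`, `β' = α^2 + β*J`, the conserved quantities of the third order map take the
values `Ĩ = 2α` and `J̃ = J`. -/
theorem somos4_in_somos5_conserved_values (α β : ℂ) (τ : ℤ → ℂ)
    (hτ : ∀ n : ℤ, τ (n + 2) * τ (n - 2) = α * (τ (n + 1) * τ (n - 1)) + β * (τ n) ^ 2)
    (hne : ∀ n : ℤ, τ n ≠ 0)
    (f : ℤ → ℂ) (hf : ∀ n : ℤ, f n = τ (n + 1) * τ (n - 1) / (τ n) ^ 2)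
    (J : ℂ)
    (hJ : ∀ n : ℤ, f (n - 1) * f n + α * (1 / f (n - 1) + 1 / f n)
      + β / (f (n - 1) * f n) = J)
    (α' β' : ℂ) (hα' : α' = -β) (hβ' : β' = α ^ 2 + β * J) :
    ∀ n : ℤ,
      (f (n - 1) * f n * f (n + 1)
        + α' * (1 / f (n - 1) + 1 / f n + 1 / f (n + 1))
        + β' / (f (n - 1) * f n * f (n + 1)) = 2 * α) ∧
      (f (n - 1) * f n + f n * f (n + 1)
        + α' * (1 / (f (n - 1) * f n) + 1 / (f n * f (n + 1)))
        + β' / (f (n - 1) * (f n) ^ 2 * f (n + 1)) = J) := by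
  have hfne : ∀ n : ℤ, f n ≠ 0 := by
    intro n
    rw [hf]
    exact div_ne_zero (mul_ne_zero (hne _) (hne _)) (pow_ne_zero _ (hne _))
  -- key relation coming from the Somos 4 recurrence:
  -- f(n-1) * f n ^ 2 * f(n+1) = α * f n + β
  have hR : ∀ n : ℤ, f (n - 1) * f n ^ 2 * f (n + 1) = α * f n + β := by
    intro n
    have e1 : n - 1 + 1 = n := by ring
    have e2 : n - 1 - 1 = n - 2 := by ring
    have e3 : n + 1 + 1 = n + 2 := by ring
    have e4 : n + 1 - 1 = n := by ring
    have h := hτ n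
    have h0 := hne n
    have h1 := hne (n + 1)
    have h2 := hne (n - 1)
    have h3 := hne (n + 2)
    have h4 := hne (n - 2)
    rw [hf (n - 1), hf n, hf (n + 1), e1, e2, e3, e4]
    field_simp
    linear_combination h
  intro n
  have ha := hfne (n - 1)
  have hb := hfne n
  have hc := hfne (n + 1)
  have hR' := hR n
  have hJn := hJ n
  subst hα' hβ'
  set a := f (n - 1) with hA
  set b := f n with hB
  set c := f (n + 1) with hC
  have hK : a ^ 2 * b ^ 2 + α * a + α * b + β - a * b * J = 0 := by
    field_simp at hJn; linear_combination hJn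
  constructor
  · have h1 : a * b * (a ^ 2 * b ^ 2 * c ^ 2 - β * (a * b + a * c + b * c)
        + β * J + α ^ 2 - 2 * α * (a * b * c)) = 0 := by
      linear_combination (a ^ 2 * b * c - α * a - β) * hR' - β * hK
    have h2 := (mul_eq_zero.mp h1).resolve_left (mul_ne_zero ha hb)
    field_simp
    linear_combination h2
  · field_simp
    apply mul_left_cancel₀ ha
    linear_combination (a * (b * (a + c) - J) + α) * hR' + α * hK
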